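/- The Dunkl kernel on the real line satisfies |E_α(-ixy)| ≤ 1 for all real x, y, where E_α(λx) = j_α(iλx) + (λx/(2(α+1))) j_{α+1}(iλx) and j_α is the normalized Bessel function of order α > -1/2. -/

import Mathlib

open Complex

/-- The normalized Bessel function `j_α(z) = Γ(α+1) ∑ (-1)^n (z/2)^{2n} / (n! Γ(n+α+1))`. -/
noncomputable def normBessel (α : ℝ) (z : ℂ) : ℂ :=
  Complex.Gamma (α + 1) *
    ∑' n : ℕ, ((-1 : ℂ) ^ n * (z / 2) ^ (2 * n) /
      ((n.factorial : ℂ) * Complex.Gamma ((n : ℂ) + α + 1)))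

/-- The Dunkl kernel `E_α(z) = j_α(iz) + (z/(2(α+1))) j_{α+1}(iz)`. -/
noncomputable def dunklKernel (α : ℝ) (z : ℂ) : ℂ :=
  normBessel α (Complex.I * z) +
    (z / (2 * ((α : ℂ) + 1))) * normBessel (α + 1) (Complex.I * z)

noncomputable def cJ (ν : ℝ) (n : ℕ) : ℝ :=
  (-1)^n * Real.Gamma (ν+1) / (4^n * n.factorial * Real.Gamma (n + ν + 1))

noncomputable def jR (ν : ℝ) (r : ℝ) : ℝ := ∑' n : ℕ, cJ ν n * r^(2*n)

lemma gamma_lb (ν : ℝ) (hν : ν ≥ -1/2) (n : ℕ) :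
    (n.factorial : ℝ) / 2^n * Real.Gamma (ν+1) ≤ Real.Gamma (n + ν + 1) := by
  have hg : 0 < Real.Gamma (ν+1) := Real.Gamma_pos_of_pos (by linarith)
  induction n with
  | zero => simp
  | succ n ih =>
    have hn : (0:ℝ) ≤ (n:ℝ) := n.cast_nonneg
    have hpos : (0:ℝ) < n + ν + 1 := by linarith
    have key : Real.Gamma ((n:ℝ) + 1 + ν + 1) = (n + ν + 1) * Real.Gamma (n + ν + 1) := by
      rw [show (n:ℝ) + 1 + ν + 1 = (n + ν + 1) + 1 by ring, Real.Gamma_add_one hpos.ne']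
    have h2 : ((n+1 : ℕ) : ℝ) / 2 ≤ n + ν + 1 := by push_cast; linarith
    have hfp : (0:ℝ) < (n.factorial : ℝ) / 2^n := by positivity
    calc ((n+1).factorial : ℝ) / 2^(n+1) * Real.Gamma (ν+1)
        = ((n+1:ℕ):ℝ)/2 * ((n.factorial:ℝ)/2^n * Real.Gamma (ν+1)) := by
          rw [Nat.factorial_succ]; push_cast; ring
      _ ≤ (n + ν + 1) * Real.Gamma (n + ν + 1) := by
          apply mul_le_mul h2 ih (by positivity) hpos.le
      _ = Real.Gamma ((n:ℝ) + 1 + ν + 1) := key.symm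
      _ = Real.Gamma (((n+1:ℕ):ℝ) + ν + 1) := by push_cast; ring_nf

lemma cJ_abs_le (ν : ℝ) (hν : ν ≥ -1/2) (n : ℕ) :
    |cJ ν n| ≤ (1/2)^n / n.factorial := by
  have hg : 0 < Real.Gamma (ν+1) := Real.Gamma_pos_of_pos (by linarith)
  have hG : 0 < Real.Gamma (n + ν + 1) :=
    Real.Gamma_pos_of_pos (by have := n.cast_nonneg (α := ℝ); linarith)
  have hlb := gamma_lb ν hν n
  rw [cJ, abs_div, abs_mul, _root_.abs_pow, abs_neg, abs_one, one_pow, one_mul,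
    abs_of_pos hg, abs_of_pos (by positivity : (0:ℝ) < 4^n * n.factorial * Real.Gamma (n+ν+1))]
  rw [div_le_div_iff₀ (by positivity) (by positivity)]
  have hfac : (0:ℝ) < n.factorial := by positivity
  have h4 : ((1:ℝ)/2)^n * (4:ℝ)^n = 2^n := by rw [← mul_pow]; norm_num
  have hlb' : (n.factorial:ℝ) * Real.Gamma (ν+1) ≤ Real.Gamma (n+ν+1) * 2^n := by
    have h2 : (0:ℝ) < 2^n := by positivity
    rw [div_mul_eq_mul_div, div_le_iff₀ h2] at hlb
    exact hlb
  have hone : (1:ℝ) ≤ (n.factorial : ℝ) := by exact_mod_cast n.factorial_pos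
  calc Real.Gamma (ν+1) * (n.factorial:ℝ)
      = (n.factorial:ℝ) * Real.Gamma (ν+1) := mul_comm _ _
    _ ≤ Real.Gamma (n+ν+1) * 2^n := hlb'
    _ ≤ (Real.Gamma (n+ν+1) * 2^n) * n.factorial := le_mul_of_one_le_right (by positivity) hone
    _ = (1/2)^n * (4^n * n.factorial * Real.Gamma (n+ν+1)) := by
        rw [show ((1:ℝ)/2)^n * (4^n * (n.factorial:ℝ) * Real.Gamma ((n:ℝ)+ν+1))
          = ((1/2)^n * 4^n) * ((n.factorial:ℝ) * Real.Gamma ((n:ℝ)+ν+1)) from by ring, h4]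
        ring

lemma summable_jR (ν : ℝ) (hν : ν ≥ -1/2) (r : ℝ) :
    Summable (fun n : ℕ => cJ ν n * r^(2*n)) := by
  apply Summable.of_norm_bounded (g := fun n => (r^2/2)^n / n.factorial * 1)
  · simpa using (Real.summable_pow_div_factorial (r^2/2)).mul_right 1
  · intro n
    rw [Real.norm_eq_abs, abs_mul, mul_one]
    calc |cJ ν n| * |r^(2*n)| ≤ (1/2)^n / n.factorial * |r^(2*n)| := by
          apply mul_le_mul_of_nonneg_right (cJ_abs_le ν hν n) (abs_nonneg _)
      _ = (r^2/2)^n / n.factorial := by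
          rw [pow_mul, _root_.abs_of_nonneg (by positivity : (0:ℝ) ≤ (r^2)^n), div_pow, one_pow, div_pow]
          field_simp

lemma cJ_succ_mul (ν : ℝ) (hν : ν ≥ -1/2) (m : ℕ) :
    cJ ν (m+1) * (2*((m:ℝ)+1)) = -(1/(2*(ν+1))) * cJ (ν+1) m := by
  have h1 : (0:ℝ) < ν + 1 := by linarith
  have hG : (0:ℝ) < Real.Gamma ((m:ℝ)+ν+2) :=
    Real.Gamma_pos_of_pos (by have := m.cast_nonneg (α := ℝ); linarith)
  have hΓ2 : Real.Gamma (ν+1+1) = (ν+1) * Real.Gamma (ν+1) := Real.Gamma_add_one h1.ne'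
  unfold cJ
  rw [show ((m+1:ℕ):ℝ) + ν + 1 = (m:ℝ)+ν+2 by push_cast; ring,
    show (m:ℝ) + (ν+1) + 1 = (m:ℝ)+ν+2 by ring, hΓ2, Nat.factorial_succ]
  have hfac : ((m.factorial:ℝ)) ≠ 0 := by positivity
  have h4 : ((4:ℝ)^m) ≠ 0 := by positivity
  push_cast [pow_succ]
  field_simp
  ring

lemma cJ_zero (ν : ℝ) (hν : (-1:ℝ) < ν) : cJ ν 0 = 1 := by
  have hg : Real.Gamma (ν+1) ≠ 0 := (Real.Gamma_pos_of_pos (by linarith)).ne'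
  simp [cJ, hg]

lemma cJ_rec (ν : ℝ) (hν : ν ≥ -1/2) (m : ℕ) :
    cJ (ν+1) (m+1) - cJ ν (m+1) = (1/(4*(ν+1)*(ν+2))) * cJ (ν+2) m := by
  have h1 : (0:ℝ) < ν + 1 := by linarith
  have h2 : (0:ℝ) < ν + 2 := by linarith
  have hm : (0:ℝ) ≤ (m:ℝ) := m.cast_nonneg
  have hG2 : (0:ℝ) < Real.Gamma ((m:ℝ)+ν+2) := Real.Gamma_pos_of_pos (by linarith)
  have hrecG : Real.Gamma ((m:ℝ)+ν+3) = ((m:ℝ)+ν+2) * Real.Gamma ((m:ℝ)+ν+2) := by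
    rw [show (m:ℝ)+ν+3 = ((m:ℝ)+ν+2)+1 by ring, Real.Gamma_add_one (by linarith)]
  have hg1 : Real.Gamma (ν+1+1) = (ν+1) * Real.Gamma (ν+1) := Real.Gamma_add_one h1.ne'
  have hg2 : Real.Gamma (ν+2+1) = (ν+2) * ((ν+1) * Real.Gamma (ν+1)) := by
    rw [Real.Gamma_add_one h2.ne', show ν+2 = ν+1+1 by ring, hg1]
  unfold cJ
  rw [show ((m+1:ℕ):ℝ) + (ν+1) + 1 = (m:ℝ)+ν+3 by push_cast; ring,
    show ((m+1:ℕ):ℝ) + ν + 1 = (m:ℝ)+ν+2 by push_cast; ring,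
    show (m:ℝ) + (ν+2) + 1 = (m:ℝ)+ν+3 by ring, hrecG, hg1, hg2, Nat.factorial_succ]
  have hfac : ((m.factorial:ℝ)) ≠ 0 := by positivity
  have h4 : ((4:ℝ)^m) ≠ 0 := by positivity
  have hg : Real.Gamma (ν+1) ≠ 0 := (Real.Gamma_pos_of_pos h1).ne'
  have hGne : Real.Gamma ((m:ℝ)+ν+2) ≠ 0 := hG2.ne'
  have h1ne : (ν+1:ℝ) ≠ 0 := h1.ne'
  have h2ne : (ν+2:ℝ) ≠ 0 := h2.ne'
  have hmne : ((m:ℝ)+ν+2) ≠ 0 := by linarith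
  push_cast [pow_succ]
  field_simp
  ring

lemma aux_summable (x : ℝ) : Summable (fun n : ℕ => 2*(n:ℝ)*x^n/(n.factorial:ℝ)) := by
  rw [← summable_nat_add_iff 1]
  have heq : (fun n : ℕ => 2*((n+1:ℕ):ℝ)*x^(n+1)/((n+1).factorial:ℝ))
      = fun n : ℕ => (2*x) * (x^n/(n.factorial:ℝ)) := by
    funext n
    rw [Nat.factorial_succ]
    have h1 : ((n+1:ℕ):ℝ) ≠ 0 := by positivity
    have h2 : ((n.factorial:ℕ):ℝ) ≠ 0 := by positivity
    push_cast at h1 ⊢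
    field_simp
    ring
  exact heq ▸ ((Real.summable_pow_div_factorial x).mul_left (2*x))

lemma summable_u (ν : ℝ) (hν : ν ≥ -1/2) (R : ℝ) :
    Summable (fun n : ℕ => |cJ ν n| * (2*(n:ℝ)) * R^(2*n)) := by
  apply Summable.of_nonneg_of_le (fun n => by rw [pow_mul]; positivity)
    (fun n => ?_) (aux_summable (R^2/2))
  have h1 : |cJ ν n| * (2*(n:ℝ)) * R^(2*n) ≤ ((1/2)^n/(n.factorial:ℝ)) * (2*(n:ℝ)) * (R^2)^n := by
    rw [pow_mul]
    gcongr
    exact cJ_abs_le ν hν n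
  calc |cJ ν n| * (2*(n:ℝ)) * R^(2*n) ≤ ((1/2)^n/(n.factorial:ℝ)) * (2*(n:ℝ)) * (R^2)^n := h1
    _ = 2*(n:ℝ)*(R^2/2)^n/(n.factorial:ℝ) := by rw [div_pow, div_pow, one_pow]; field_simp

lemma hasDerivAt_jR (ν : ℝ) (hν : ν ≥ -1/2) (r : ℝ) :
    HasDerivAt (jR ν) (-(r/(2*(ν+1))) * jR (ν+1) r) r := by
  set R : ℝ := |r| + 1 with hR
  have hR1 : (1:ℝ) ≤ R := by have := abs_nonneg r; rw [hR]; linarith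
  have hR0 : (0:ℝ) < R := by linarith
  have hrR : r ∈ Metric.ball (0:ℝ) R := by
    simp only [Metric.mem_ball, Real.dist_eq, sub_zero, hR]; linarith
  have h0R : (0:ℝ) ∈ Metric.ball (0:ℝ) R := by
    simp only [Metric.mem_ball, Real.dist_eq, sub_zero, abs_zero]; linarith
  have hderiv : ∀ (n : ℕ) (z : ℝ), z ∈ Metric.ball (0:ℝ) R →
      HasDerivAt (fun z => cJ ν n * z^(2*n)) (cJ ν n * ((2*n:ℕ) * z^(2*n-1))) z := by
    intro n z _
    exact (hasDerivAt_pow (2*n) z).const_mul (cJ ν n)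
  have hbound : ∀ (n : ℕ) (z : ℝ), z ∈ Metric.ball (0:ℝ) R →
      ‖cJ ν n * ((2*n:ℕ) * z^(2*n-1))‖ ≤ |cJ ν n| * (2*(n:ℝ)) * R^(2*n) := by
    intro n z hz
    have hzR : |z| ≤ R := by
      simp only [Metric.mem_ball, Real.dist_eq, sub_zero] at hz; linarith
    calc ‖cJ ν n * ((2*n:ℕ) * z^(2*n-1))‖ = |cJ ν n| * (2*(n:ℝ)) * |z|^(2*n-1) := by
          rw [Real.norm_eq_abs, abs_mul, abs_mul, ← _root_.abs_pow]
          push_cast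
          rw [_root_.abs_of_nonneg (by positivity : (0:ℝ) ≤ 2*(n:ℝ))]
          ring
      _ ≤ |cJ ν n| * (2*(n:ℝ)) * R^(2*n) := by
          apply mul_le_mul_of_nonneg_left _ (by positivity)
          calc |z|^(2*n-1) ≤ R^(2*n-1) := pow_le_pow_left₀ (abs_nonneg z) hzR _
            _ ≤ R^(2*n) := pow_le_pow_right₀ hR1 (Nat.sub_le _ _)
  have hsum0 : Summable (fun n : ℕ => cJ ν n * (0:ℝ)^(2*n)) := summable_jR ν hν 0
  have hD : HasDerivAt (fun z => ∑' n : ℕ, cJ ν n * z^(2*n))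
      (∑' n : ℕ, cJ ν n * ((2*n:ℕ) * r^(2*n-1))) r :=
    hasDerivAt_tsum_of_isPreconnected (summable_u ν hν R) Metric.isOpen_ball
      (convex_ball (0:ℝ) R).isPreconnected hderiv hbound h0R hsum0 hrR
  have hsumd : Summable (fun n : ℕ => cJ ν n * ((2*n:ℕ) * r^(2*n-1))) :=
    (summable_u ν hν R).of_norm_bounded (fun n => hbound n r hrR)
  have htail : ∀ m : ℕ, cJ ν (m+1) * ((2*(m+1):ℕ) * r^(2*(m+1)-1))
      = -(r/(2*(ν+1))) * (cJ (ν+1) m * r^(2*m)) := by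
    intro m
    have h1 := cJ_succ_mul ν hν m
    have h2 : 2*(m+1)-1 = 2*m+1 := rfl
    rw [h2]
    push_cast
    calc cJ ν (m+1) * ((2*((m:ℝ)+1)) * r^(2*m+1))
        = (cJ ν (m+1) * (2*((m:ℝ)+1))) * r^(2*m+1) := by ring
      _ = (-(1/(2*(ν+1))) * cJ (ν+1) m) * r^(2*m+1) := by rw [h1]
      _ = -(r/(2*(ν+1))) * (cJ (ν+1) m * r^(2*m)) := by rw [pow_succ]; ring
  have hts : (∑' n : ℕ, cJ ν n * ((2*n:ℕ) * r^(2*n-1)))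
      = -(r/(2*(ν+1))) * jR (ν+1) r := by
    rw [hsumd.tsum_eq_zero_add]
    simp only [htail]
    rw [tsum_mul_left, jR]
    simp
  rw [← hts]
  exact hD

lemma jR_rec (ν : ℝ) (hν : ν ≥ -1/2) (r : ℝ) :
    jR (ν+1) r - jR ν r = r^2/(4*(ν+1)*(ν+2)) * jR (ν+2) r := by
  have hs1 := summable_jR (ν+1) (by linarith) r
  have hs0 := summable_jR ν hν r
  have hf : Summable (fun n : ℕ => (cJ (ν+1) n - cJ ν n) * r^(2*n)) := by
    have := hs1.sub hs0
    refine this.congr (fun n => ?_)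
    ring
  have hsub : jR (ν+1) r - jR ν r = ∑' n : ℕ, ((cJ (ν+1) n - cJ ν n) * r^(2*n)) := by
    rw [jR, jR, ← hs1.tsum_sub hs0]
    congr 1; funext n; ring
  rw [hsub, hf.tsum_eq_zero_add]
  have h0 : (cJ (ν+1) 0 - cJ ν 0) * r^(2*0) = 0 := by
    rw [cJ_zero (ν+1) (by linarith), cJ_zero ν (by linarith)]; ring
  have hterm : ∀ m : ℕ, (cJ (ν+1) (m+1) - cJ ν (m+1)) * r^(2*(m+1))
      = r^2/(4*(ν+1)*(ν+2)) * (cJ (ν+2) m * r^(2*m)) := by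
    intro m
    rw [cJ_rec ν hν m, show 2*(m+1) = 2*m+2 from by ring, pow_add]
    ring
  rw [h0, zero_add]
  simp only [hterm]
  rw [tsum_mul_left, jR]

lemma jR_zero (ν : ℝ) : jR ν 0 = cJ ν 0 := by
  rw [jR, tsum_eq_single 0 (fun n hn => ?_)]
  · norm_num
  · rw [zero_pow (by omega : 2*n ≠ 0), mul_zero]

lemma hasDerivAt_F (α : ℝ) (hα : α > -1/2) (s : ℝ) :
    HasDerivAt (fun t => (jR α t)^2 + (t/(2*(α+1)))^2 * (jR (α+1) t)^2)
      (-(s*(2*α+1)/(2*(α+1)^2)) * (jR (α+1) s)^2) s := by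
  have h1 : (0:ℝ) < α + 1 := by linarith
  have h2 : (0:ℝ) < α + 2 := by linarith
  have ha := hasDerivAt_jR α hα.le s
  have hb := hasDerivAt_jR (α+1) (by linarith) s
  have hq : HasDerivAt (fun t : ℝ => (t/(2*(α+1)))^2)
      (2 * (s/(2*(α+1)))^(2-1) * (1/(2*(α+1)))) s := by
    exact ((hasDerivAt_id s).div_const (2*(α+1))).pow 2
  have hD := ((ha.pow 2).add (hq.mul (hb.pow 2)))
  refine hD.congr_deriv ?_
  symm
  have hrec := jR_rec α hα.le s
  set a := jR α s
  set b := jR (α+1) s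
  set c := jR (α+1+1) s with hc
  have hrec' : s^2 * c = 4*(α+1)*(α+2) * (b - a) := by
    rw [show α+1+1 = α+2 from by ring] at hc
    rw [hc]
    rw [show (α+2:ℝ) = α+1+1 from by ring] at *
    field_simp at hrec
    linarith [hrec]
  simp only [Pi.pow_apply, Nat.cast_ofNat, Nat.add_one_sub_one, pow_one]
  have h1ne : α + 1 ≠ 0 := h1.ne'
  have h2ne : α + 1 + 1 ≠ 0 := by linarith
  field_simp
  linear_combination (s * b) * hrec'

lemma F_le_one (α : ℝ) (hα : α > -1/2) (r : ℝ) (hr : 0 ≤ r) :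
    (jR α r)^2 + (r/(2*(α+1)))^2 * (jR (α+1) r)^2 ≤ 1 := by
  set F : ℝ → ℝ := fun t => (jR α t)^2 + (t/(2*(α+1)))^2 * (jR (α+1) t)^2 with hF
  have hdiff : ∀ s, HasDerivAt F (-(s*(2*α+1)/(2*(α+1)^2)) * (jR (α+1) s)^2) s :=
    fun s => hasDerivAt_F α hα s
  have hanti : AntitoneOn F (Set.Ici (0:ℝ)) := by
    apply antitoneOn_of_deriv_nonpos (convex_Ici 0)
      (fun s _ => ((hdiff s).differentiableAt.continuousAt).continuousWithinAt)
      (fun s _ => (hdiff s).differentiableAt.differentiableWithinAt)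
    intro s hs
    rw [interior_Ici] at hs
    rw [(hdiff s).deriv]
    have hs0 : (0:ℝ) < s := hs
    have h21 : (0:ℝ) < 2*α+1 := by linarith
    have : (0:ℝ) ≤ s*(2*α+1)/(2*(α+1)^2) := by positivity
    nlinarith [sq_nonneg (jR (α+1) s)]
  have hF0 : F 0 = 1 := by
    rw [hF]
    simp only [jR_zero]
    rw [cJ_zero α (by linarith)]
    norm_num
  calc F r ≤ F 0 := hanti (Set.mem_Ici.mpr le_rfl) (Set.mem_Ici.mpr hr) hr
    _ = 1 := hF0

lemma normBessel_ofReal (ν : ℝ) (hν : ν > -1) (r : ℝ) :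
    normBessel ν (r : ℂ) = ((jR ν r : ℝ) : ℂ) := by
  have hterm : ∀ n : ℕ, ((-1 : ℂ) ^ n * ((r:ℂ) / 2) ^ (2 * n) /
      ((n.factorial : ℂ) * Complex.Gamma ((n : ℂ) + ν + 1)))
      = (((-1:ℝ)^n * (r/2)^(2*n) / ((n.factorial:ℝ) * Real.Gamma ((n:ℝ) + ν + 1)) : ℝ) : ℂ) := by
    intro n
    rw [show ((n:ℂ) + ν + 1) = (((n:ℝ) + ν + 1 : ℝ) : ℂ) by push_cast; ring,
      Complex.Gamma_ofReal]
    push_cast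
    ring
  have hcoef : ∀ n : ℕ, Real.Gamma (ν+1) *
      ((-1:ℝ)^n * (r/2)^(2*n) / ((n.factorial:ℝ) * Real.Gamma ((n:ℝ) + ν + 1)))
      = cJ ν n * r^(2*n) := by
    intro n
    rw [cJ, div_pow, show ((2:ℝ))^(2*n) = 4^n by rw [pow_mul]; norm_num]
    ring
  rw [normBessel, show ((ν:ℂ) + 1) = (((ν + 1 : ℝ)) : ℂ) by push_cast; ring,
    Complex.Gamma_ofReal]
  simp only [hterm]
  rw [← Complex.ofReal_tsum, ← Complex.ofReal_mul]
  congr 1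
  rw [jR, ← tsum_mul_left]
  exact tsum_congr hcoef

/-- The Dunkl kernel satisfies `|E_α(-ixy)| ≤ 1` for all real `x, y`, when `α > -1/2`. -/
theorem dunklKernel_abs_le_one (α : ℝ) (hα : α > -1/2) (x y : ℝ) :
    ‖dunklKernel α (-Complex.I * x * y)‖ ≤ 1 := by
  have harg : Complex.I * (-Complex.I * x * y) = ((x * y : ℝ) : ℂ) := by
    rw [show Complex.I * (-Complex.I * x * y) = -(Complex.I^2) * ((x:ℂ)*(y:ℂ)) by ring,
      Complex.I_sq]
    push_cast
    ring
  have hz : dunklKernel α (-Complex.I * x * y)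
      = ((jR α (x*y) : ℝ) : ℂ)
        + ((-((x*y) * jR (α+1) (x*y) / (2*(α+1))) : ℝ) : ℂ) * Complex.I := by
    rw [dunklKernel, harg, normBessel_ofReal α (by linarith) (x*y),
      normBessel_ofReal (α+1) (by linarith) (x*y)]
    push_cast
    ring
  rw [hz, Complex.norm_def, Complex.normSq_add_mul_I, Real.sqrt_le_one]
  have habs : (jR α (x*y))^2 + (-((x*y) * jR (α+1) (x*y) / (2*(α+1))))^2
      = (jR α |x*y|)^2 + (|x*y|/(2*(α+1)))^2 * (jR (α+1) |x*y|)^2 := by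
    have hjR : ∀ ν : ℝ, jR ν |x*y| = jR ν (x*y) := by
      intro ν
      rw [jR, jR]
      apply tsum_congr
      intro n
      rw [pow_mul, pow_mul, _root_.sq_abs]
    have hk : (2*(α+1):ℝ) ≠ 0 := by intro h; simp at h; linarith
    rw [hjR, hjR, div_pow, _root_.sq_abs]
    field_simp
  rw [habs]
  exact F_le_one α hα |x*y| (abs_nonneg _)
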